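/- With σ² = 2e(1−e)/n being the variance of each hold-out estimator, and the correlation structure ρ₁ (within two-fold pairs) and ρ₂ (across pairs), the 5×2 cross-validated estimator E_{5×2} = (1/10)∑_{j=1}^{5}∑_{k=1}^{2} E_k^{(j)} has variance (1 + ρ₁ + 8ρ₂)·e(1−e)/(5n). -/

import Mathlib

open MeasureTheory

/-- Covariance of two real random variables. -/
noncomputable def cov {Ω : Type*} [MeasurableSpace Ω] (μ : Measure Ω) (X Y : Ω → ℝ) : ℝ :=
  (∫ ω, X ω * Y ω ∂μ) - (∫ ω, X ω ∂μ) * (∫ ω, Y ω ∂μ)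

lemma cov_symm {Ω : Type*} [MeasurableSpace Ω] (μ : Measure Ω) (X Y : Ω → ℝ) :
    cov μ X Y = cov μ Y X := by
  simp [cov, mul_comm]

lemma cov_sum_sum {Ω : Type*} [MeasurableSpace Ω] (μ : Measure Ω) [IsProbabilityMeasure μ]
    {ι : Type*} [Fintype ι] (X : ι → Ω → ℝ) (h : ∀ i, MemLp (X i) 2 μ) :
    cov μ (fun ω => ∑ i, X i ω) (fun ω => ∑ i, X i ω)
      = ∑ i, ∑ j, cov μ (X i) (X j) := by
  have hint : ∀ i, Integrable (X i) μ := fun i => (h i).integrable one_le_two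
  have hmul : ∀ i j, Integrable (fun ω => X i ω * X j ω) μ := by
    intro i j
    rw [← memLp_one_iff_integrable]
    exact (h j).smul (r := 1) (h i)
  unfold cov
  have h1 : (∫ ω, (∑ i, X i ω) * (∑ j, X j ω) ∂μ)
      = ∑ i, ∑ j, ∫ ω, X i ω * X j ω ∂μ := by
    have : ∀ ω, (∑ i, X i ω) * (∑ j, X j ω) = ∑ i, ∑ j, X i ω * X j ω := by
      intro ω; rw [Finset.sum_mul_sum]
    simp_rw [this]
    rw [integral_finset_sum _ (fun i _ => integrable_finset_sum _ (fun j _ => hmul i j))]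
    exact Finset.sum_congr rfl fun i _ => integral_finset_sum _ (fun j _ => hmul i j)
  have h2 : (∫ ω, (∑ i, X i ω) ∂μ) = ∑ i, ∫ ω, X i ω ∂μ :=
    integral_finset_sum _ (fun i _ => hint i)
  rw [h1, h2, Finset.sum_mul_sum, ← Finset.sum_sub_distrib]
  exact Finset.sum_congr rfl fun i _ => (Finset.sum_sub_distrib _ _).symm

/-- With `σ² = 2e(1-e)/n` the variance of each hold-out estimator, within-pair correlation `ρ₁`
and cross-pair correlation `ρ₂`, the 5×2 cross-validated estimator
`E₅ₓ₂ = (1/10) ∑_{j,k} E_k^{(j)}` has variance `(1 + ρ₁ + 8ρ₂) e(1-e)/(5n)`. -/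
theorem variance_E_5x2 {Ω : Type*} [MeasurableSpace Ω] (μ : Measure Ω)
    [IsProbabilityMeasure μ] (E : Fin 5 → Fin 2 → Ω → ℝ) (e ρ1 ρ2 n : ℝ) (hn : 0 < n)
    (he0 : 0 ≤ e) (he1 : e ≤ 1)
    (hmeas : ∀ j k, Measurable (E j k)) (hL2 : ∀ j k, MemLp (E j k) 2 μ)
    (hvar : ∀ j k, cov μ (E j k) (E j k) = 2 * e * (1 - e) / n)
    (hρ1 : ∀ j, cov μ (E j 0) (E j 1) = ρ1 * (2 * e * (1 - e) / n))
    (hρ2 : ∀ j j' k k', j ≠ j' → cov μ (E j k) (E j' k') = ρ2 * (2 * e * (1 - e) / n)) :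
    cov μ (fun ω => (∑ j : Fin 5, ∑ k : Fin 2, E j k ω) / 10)
        (fun ω => (∑ j : Fin 5, ∑ k : Fin 2, E j k ω) / 10)
      = (1 + ρ1 + 8 * ρ2) * (e * (1 - e)) / (5 * n) := by
  have hρ1' : ∀ j, cov μ (E j 1) (E j 0) = ρ1 * (2 * e * (1 - e) / n) := fun j => by
    rw [cov_symm]; exact hρ1 j
  set S : Ω → ℝ := fun ω => ∑ j : Fin 5, ∑ k : Fin 2, E j k ω with hS
  have hdiv : cov μ (fun ω => S ω / 10) (fun ω => S ω / 10) = cov μ S S / 100 := by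
    unfold cov
    have e1 : (fun ω => S ω / 10 * (S ω / 10)) = fun ω => S ω * S ω / 100 := by
      funext ω; ring
    rw [e1, integral_div, integral_div]
    ring
  have hSprod : S = fun ω => ∑ p : Fin 5 × Fin 2, E p.1 p.2 ω := by
    funext ω; rw [Fintype.sum_prod_type]
  have hcov : cov μ S S = ∑ p : Fin 5 × Fin 2, ∑ q : Fin 5 × Fin 2,
      cov μ (E p.1 p.2) (E q.1 q.2) := by
    rw [hSprod]
    exact cov_sum_sum μ _ (fun p => hL2 p.1 p.2)
  have hval : cov μ S S = 10 * (2 * e * (1 - e) / n) + 10 * (ρ1 * (2 * e * (1 - e) / n))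
      + 80 * (ρ2 * (2 * e * (1 - e) / n)) := by
    rw [hcov]
    simp only [Fintype.sum_prod_type, Fin.sum_univ_five, Fin.sum_univ_two]
    rw [hvar, hvar, hvar, hvar, hvar, hvar, hvar, hvar, hvar, hvar,
      hρ1' 0, hρ1' 1, hρ1' 2, hρ1' 3, hρ1' 4, hρ1 0, hρ1 1, hρ1 2, hρ1 3, hρ1 4]
    rw [hρ2 0 1 _ _ (by decide), hρ2 0 1 _ _ (by decide), hρ2 0 1 _ _ (by decide),
      hρ2 0 1 _ _ (by decide)]
    repeat rw [hρ2 _ _ _ _ (by decide)]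
    ring
  rw [hdiv, hval]
  field_simp
  ring
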